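/- Let Γ : G → R be a partial projective σ-representation of G in a unital κ-algebra R and X a unital R-bimodule. Then the map Γ' : G → End_κ(X) defined by Γ'_g(x) = Γ(g)·x·Γ(g⁻¹) is a partial projective σ'-representation, where σ'(g,h) = σ(g,h)σ(h⁻¹,g⁻¹). -/
import Mathlib

open MulOpposite

theorem bimodule_partial_projective_rep
    {κ G R X : Type*} [Field κ] [Group G] [Ring R] [Algebra κ R]
    [AddCommGroup X] [Module κ X]
    [Module R X] [Module Rᵐᵒᵖ X] [SMulCommClass R Rᵐᵒᵖ X]
    [IsScalarTower κ R X] [IsScalarTower κ Rᵐᵒᵖ X]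
    (Γ : G → R) (σ : G → G → κ)
    (h1 : ∀ g h : G, σ g h = 0 → Γ g⁻¹ * Γ (g * h) = 0 ∧ Γ (g * h) * Γ h⁻¹ = 0)
    (h2 : ∀ g h : G, Γ g⁻¹ * Γ g * Γ h = σ g h • (Γ g⁻¹ * Γ (g * h)))
    (h3 : ∀ g h : G, Γ g * Γ h * Γ h⁻¹ = σ g h • (Γ (g * h) * Γ h⁻¹))
    (h4 : Γ 1 = 1)
    (σ' : G → G → κ) (hσ' : ∀ g h : G, σ' g h = σ g h * σ h⁻¹ g⁻¹) :
    ∃ Γ' : G → Module.End κ X,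
      (∀ (g : G) (x : X), Γ' g x = Γ g • (MulOpposite.op (Γ g⁻¹) • x)) ∧
      (∀ g h : G, σ' g h = 0 →
        Γ' g⁻¹ * Γ' (g * h) = 0 ∧ Γ' (g * h) * Γ' h⁻¹ = 0) ∧
      (∀ g h : G, Γ' g⁻¹ * Γ' g * Γ' h = σ' g h • (Γ' g⁻¹ * Γ' (g * h))) ∧
      (∀ g h : G, Γ' g * Γ' h * Γ' h⁻¹ = σ' g h • (Γ' (g * h) * Γ' h⁻¹)) ∧
      (Γ' 1 = 1) := by
  set L : G → Module.End κ X := fun g =>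
    { toFun := fun x => Γ g • (op (Γ g⁻¹) • x)
      map_add' := by intro x y; simp [smul_add]
      map_smul' := by
        intro c x
        simp only [RingHom.id_apply]
        rw [smul_comm c (Γ g), smul_comm c (op (Γ g⁻¹))] } with hL
  have Lapp : ∀ (g : G) (x : X), L g x = Γ g • (op (Γ g⁻¹) • x) := fun g x => rfl
  have key : ∀ (a b c d : R) (x : X),
      a • op b • (c • op d • x) = (a * c) • op (d * b) • x := by
    intro a b c d x
    rw [← smul_smul a c, op_mul, mul_smul, smul_comm c (op b)]
  have comp : ∀ (g h : G) (x : X),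
      (L g * L h) x = (Γ g * Γ h) • op (Γ h⁻¹ * Γ g⁻¹) • x := by
    intro g h x
    rw [Module.End.mul_apply, Lapp, Lapp, key]
  have fin : ∀ (s t : κ) (a b : R) (c : Rᵐᵒᵖ) (y : X),
      s • a • b • c • t • y = (s * t) • (a * b) • c • y := by
    intro s t a b c y
    rw [← smul_comm t c, ← smul_comm t b, ← smul_comm t a, smul_smul, mul_smul a b]
  refine ⟨L, Lapp, ?_, ?_, ?_, ?_⟩
  · intro g h hz
    rw [hσ' g h] at hz
    rcases mul_eq_zero.mp hz with hz | hz
    · obtain ⟨e1, e2⟩ := h1 g h hz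
      constructor <;> ext x
      · rw [comp, e1]; simp
      · rw [comp, e2]; simp
    · obtain ⟨e1, e2⟩ := h1 h⁻¹ g⁻¹ hz
      rw [inv_inv] at e1 e2
      constructor <;> ext x
      · rw [comp]
        simp only [inv_inv, mul_inv_rev]
        rw [e2]; simp
      · rw [comp]
        simp only [inv_inv, mul_inv_rev]
        rw [e1]; simp
  · intro g h
    ext x
    have e1 := h2 g h
    have e2 := h3 h⁻¹ g⁻¹
    rw [inv_inv] at e2
    rw [Module.End.mul_apply, comp, Lapp, key, LinearMap.smul_apply, comp,
      mul_inv_rev, inv_inv, ← mul_assoc (Γ h⁻¹), e1, e2, hσ' g h,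
      op_smul, smul_assoc, smul_assoc]
    rw [smul_comm _ (σ h⁻¹ g⁻¹), smul_smul]
  · intro g h
    ext x
    have e1 := h3 g h
    have e2 := h2 h⁻¹ g⁻¹
    rw [inv_inv] at e2
    rw [Module.End.mul_apply, comp, Lapp, key, LinearMap.smul_apply, comp,
      mul_inv_rev, inv_inv, ← mul_assoc, e1, e2, hσ' g h,
      op_smul, smul_assoc, smul_assoc]
    rw [smul_comm _ (σ h⁻¹ g⁻¹), smul_smul]
  · ext x
    rw [Lapp]
    simp [h4]
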